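/- Let X be a geometric tree and f:X→ℝ continuous with finitely many local minima X₁,…,Xₙ. For i≠j, the minimum over all t of the property 'X_i and X_j lie in the same connected component of f⁻¹(-∞,t]' equals the maximum of f over the shortest path between X_i and X_j in X. -/

import Mathlib

open scoped Classical

noncomputable section

instance dartTop {V : Type*} (G : SimpleGraph V) : TopologicalSpace G.Dart := ⊥

/-- Gluing relation for the geometric realization of a graph: one copy of `[0,1]` per
oriented edge, opposite orientations identified by `t ↦ 1-t`, and starting points of edges
with the same initial vertex identified. -/
def treeRel {V : Type*} (G : SimpleGraph V) :
    (G.Dart × ↥(Set.Icc (0:ℝ) 1)) → (G.Dart × ↥(Set.Icc (0:ℝ) 1)) → Prop :=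
  fun p q =>
    (p.1 = q.1.symm ∧ (p.2 : ℝ) = 1 - (q.2 : ℝ)) ∨
    (p.1.toProd.1 = q.1.toProd.1 ∧ (p.2 : ℝ) = 0 ∧ (q.2 : ℝ) = 0)

/-- The geometric realization of a graph. -/
def TreeSpace {V : Type*} (G : SimpleGraph V) := Quot (treeRel G)

instance {V : Type*} (G : SimpleGraph V) : TopologicalSpace (TreeSpace G) :=
  instTopologicalSpaceQuot
/-- Sublevel set of a function. -/
def sub {X : Type*} (f : X → ℝ) (t : ℝ) : Set X := {x | f x ≤ t}
/-- A local minimum of `f`: a connected set on which `f` is constant, such that every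
connected set strictly containing it contains a point of strictly larger value. -/
def IsLocMin {X : Type*} [TopologicalSpace X] (f : X → ℝ) (M : Set X) : Prop :=
  IsConnected M ∧ (∃ c : ℝ, ∀ x ∈ M, f x = c) ∧
    ∀ M' : Set X, IsConnected M' → M ⊂ M' → ∃ x ∈ M', ∀ y ∈ M, f y < f x

/-- `A` and `B` lie in the same connected component of the sublevel set of `f` at `s`. -/
def SameComp {X : Type*} [TopologicalSpace X] (f : X → ℝ) (A B : Set X) (s : ℝ) : Prop :=
  ∃ x ∈ A, ∃ y ∈ B, x ∈ sub f s ∧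
    connectedComponentIn (sub f s) x = connectedComponentIn (sub f s) y

namespace TreeAux

open SimpleGraph Set

variable {V : Type*} {G : SimpleGraph V}

instance : DiscreteTopology G.Dart := ⟨rfl⟩

/-- The point of the tree space given by a dart and a coordinate. -/
def mkp (G : SimpleGraph V) (e : G.Dart) (s : Set.Icc (0:ℝ) 1) : TreeSpace G :=
  Quot.mk (treeRel G) (e, s)

lemma one_sub_mem {s : ℝ} (h : s ∈ Set.Icc (0:ℝ) 1) : 1 - s ∈ Set.Icc (0:ℝ) 1 :=
  ⟨by linarith [h.2], by linarith [h.1]⟩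

lemma zero_mem : (0:ℝ) ∈ Set.Icc (0:ℝ) 1 := ⟨le_refl 0, zero_le_one⟩

lemma mkp_symm (e : G.Dart) (s : Set.Icc (0:ℝ) 1) :
    mkp G e s = mkp G e.symm ⟨1 - (s:ℝ), one_sub_mem s.2⟩ :=
  Quot.sound (Or.inl ⟨(e.symm_symm).symm, by ring⟩)

lemma mkp_vert {e e' : G.Dart} (h : e.toProd.1 = e'.toProd.1)
    (s s' : Set.Icc (0:ℝ) 1) (hs : (s:ℝ) = 0) (hs' : (s':ℝ) = 0) :
    mkp G e s = mkp G e' s' :=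
  Quot.sound (Or.inr ⟨h, hs, hs'⟩)

/-- Which side of the (removed) edge of `d` a vertex lies on. -/
def side (d : G.Dart) (w : V) : ℝ :=
  if (G \ SimpleGraph.fromEdgeSet {s(d.toProd.1, d.toProd.2)}).Reachable d.toProd.1 w then 0 else 1

lemma side_fst (d : G.Dart) : side d d.toProd.1 = 0 := if_pos (Reachable.refl _)

/-- The hypothesis that the edge of `d` is a bridge. -/
def Hb (d : G.Dart) : Prop :=
  ¬ (G \ SimpleGraph.fromEdgeSet {s(d.toProd.1, d.toProd.2)}).Reachable d.toProd.1 d.toProd.2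

lemma side_snd {d : G.Dart} (hb : Hb d) : side d d.toProd.2 = 1 := if_neg hb

lemma side_mem (d : G.Dart) (w : V) : side d w = 0 ∨ side d w = 1 := by
  unfold side; split_ifs <;> simp

lemma side_edge {d e : G.Dart} (h1 : e ≠ d) (h2 : e ≠ d.symm) :
    side d e.toProd.1 = side d e.toProd.2 := by
  have hedge : e.edge ≠ d.edge := by
    intro h
    rw [dart_edge_eq_iff] at h
    rcases h with rfl | rfl
    · exact h1 rfl
    · exact h2 rfl
  have hadj : (G \ SimpleGraph.fromEdgeSet {s(d.toProd.1, d.toProd.2)}).Adj e.toProd.1 e.toProd.2 := by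
    rw [sdiff_adj, fromEdgeSet_adj]
    refine ⟨e.adj, ?_⟩
    rintro ⟨hmem, -⟩
    apply hedge
    simp only [Set.mem_singleton_iff] at hmem
    rw [show e.edge = s(e.toProd.1, e.toProd.2) from rfl,
      show d.edge = s(d.toProd.1, d.toProd.2) from rfl]
    exact hmem
  unfold side
  refine if_congr ⟨fun h => h.trans hadj.reachable, fun h => h.trans hadj.symm.reachable⟩ rfl rfl

/-- The potential function on darts-with-coordinates. -/
def phi (d : G.Dart) : G.Dart × ↥(Set.Icc (0:ℝ) 1) → ℝ := fun x =>
  if x.1 = d then (x.2 : ℝ) else if x.1 = d.symm then 1 - (x.2:ℝ) else side d x.1.toProd.1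

lemma phi_self (d : G.Dart) (s : Set.Icc (0:ℝ) 1) : phi d (d, s) = (s:ℝ) := if_pos rfl

lemma phi_symm (d : G.Dart) (s : Set.Icc (0:ℝ) 1) : phi d (d.symm, s) = 1 - (s:ℝ) := by
  unfold phi
  rw [if_neg (Dart.symm_ne d), if_pos rfl]

lemma phi_other {d e : G.Dart} (h1 : e ≠ d) (h2 : e ≠ d.symm) (s : Set.Icc (0:ℝ) 1) :
    phi d (e, s) = side d e.toProd.1 := by
  unfold phi
  rw [if_neg h1, if_neg h2]

lemma phi_zero {d : G.Dart} (hb : Hb d) (e : G.Dart) {s : Set.Icc (0:ℝ) 1}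
    (hs : (s:ℝ) = 0) : phi d (e, s) = side d e.toProd.1 := by
  by_cases h1 : e = d
  · subst h1; rw [phi_self, hs, side_fst]
  by_cases h2 : e = d.symm
  · subst h2
    rw [phi_symm, hs]
    have h3 : (d.symm).toProd.1 = d.toProd.2 := rfl
    rw [h3, side_snd hb]; ring
  · exact phi_other h1 h2 s

lemma phi_mem (d : G.Dart) (x : G.Dart × ↥(Set.Icc (0:ℝ) 1)) :
    phi d x ∈ Set.Icc (0:ℝ) 1 := by
  unfold phi
  split_ifs with h1 h2
  · exact x.2.2
  · exact one_sub_mem x.2.2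
  · rcases side_mem d x.1.toProd.1 with h | h <;> rw [h] <;> norm_num

lemma phi_resp {d : G.Dart} (hb : Hb d) :
    ∀ a b, treeRel G a b → phi d a = phi d b := by
  rintro ⟨e, s⟩ ⟨e', s'⟩ (⟨h1, h2⟩ | ⟨h1, h2, h3⟩)
  · simp only at h1 h2
    subst h1
    by_cases he1 : e' = d
    · subst he1
      rw [phi_symm, phi_self]; linarith
    by_cases he2 : e' = d.symm
    · subst he2
      rw [Dart.symm_symm, phi_self, phi_symm]; linarith
    · have ha : e'.symm ≠ d := fun h => he2 (by rw [← h, Dart.symm_symm])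
      have hb' : e'.symm ≠ d.symm := fun h => he1 (by
        have := congrArg Dart.symm h
        rwa [Dart.symm_symm, Dart.symm_symm] at this)
      rw [phi_other ha hb', phi_other he1 he2]
      have h3 : (e'.symm).toProd.1 = e'.toProd.2 := rfl
      rw [h3, (side_edge he1 he2).symm]
  · simp only at h1
    rw [phi_zero hb _ h2, phi_zero hb _ h3, h1]

/-- The potential function on the tree space. -/
def Phi (d : G.Dart) (hb : Hb d) : TreeSpace G → ℝ :=
  Quot.lift (phi d) (phi_resp hb)

lemma Phi_mkp (d : G.Dart) (hb : Hb d) (e : G.Dart) (s : Set.Icc (0:ℝ) 1) :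
    Phi d hb (mkp G e s) = phi d (e, s) := rfl

lemma Phi_mem (d : G.Dart) (hb : Hb d) (u : TreeSpace G) :
    Phi d hb u ∈ Set.Icc (0:ℝ) 1 := by
  induction u using Quot.ind with
  | _ x => exact phi_mem d x

lemma Phi_nonneg (d : G.Dart) (hb : Hb d) (u : TreeSpace G) : 0 ≤ Phi d hb u :=
  (Phi_mem d hb u).1

lemma Phi_le_one (d : G.Dart) (hb : Hb d) (u : TreeSpace G) : Phi d hb u ≤ 1 :=
  (Phi_mem d hb u).2

lemma Phi_eq_inner {d : G.Dart} (hb : Hb d) {r : ℝ} (hr : r ∈ Set.Ioo (0:ℝ) 1)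
    {u : TreeSpace G} (hu : Phi d hb u = r) :
    u = mkp G d ⟨r, Set.Ioo_subset_Icc_self hr⟩ := by
  induction u using Quot.ind with
  | _ x =>
    obtain ⟨e, s⟩ := x
    rw [show Quot.mk (treeRel G) (e, s) = mkp G e s from rfl] at hu ⊢
    rw [Phi_mkp] at hu
    unfold phi at hu
    simp only at hu
    split_ifs at hu with h1 h2
    · subst h1
      congr 1
      exact Subtype.ext hu
    · subst h2
      have hs : (s:ℝ) = 1 - r := by linarith
      have : mkp G d.symm s = mkp G d.symm.symm ⟨1 - (s:ℝ), one_sub_mem s.2⟩ := mkp_symm _ _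
      rw [this]
      have h3 : d.symm.symm = d := Dart.symm_symm d
      have h4 : (1 : ℝ) - (s:ℝ) = r := by linarith
      -- rewrite the dart and the coordinate
      refine Eq.trans ?_ rfl
      rw [show mkp G d.symm.symm ⟨1 - (s:ℝ), one_sub_mem s.2⟩
            = mkp G d ⟨r, Set.Ioo_subset_Icc_self hr⟩ from by
        congr 1 <;> try exact h3
        · exact Subtype.ext h4]
    · rcases side_mem d e.toProd.1 with h | h <;> rw [h] at hu
      · exact absurd hu.symm (ne_of_gt hr.1)
      · exact absurd hu (ne_of_gt hr.2)

lemma frontier_fst_pre (S : Set G.Dart) :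
    frontier {x : G.Dart × ↥(Set.Icc (0:ℝ) 1) | x.1 ∈ S} = ∅ := by
  have h1 : IsClopen {x : G.Dart × ↥(Set.Icc (0:ℝ) 1) | x.1 ∈ S} :=
    (isClopen_discrete S).preimage continuous_fst
  rw [frontier, h1.isClosed.closure_eq, h1.isOpen.interior_eq, Set.diff_self]

lemma continuous_phi (d : G.Dart) : Continuous (phi d) := by
  unfold phi
  have hc2 : Continuous fun x : G.Dart × ↥(Set.Icc (0:ℝ) 1) => (x.2 : ℝ) :=
    continuous_subtype_val.comp continuous_snd
  refine Continuous.if ?_ hc2 (Continuous.if ?_ (by fun_prop) ?_)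
  · intro a ha
    rw [show {x : G.Dart × ↥(Set.Icc (0:ℝ) 1) | x.1 = d} = {x | x.1 ∈ ({d} : Set G.Dart)} from rfl,
      frontier_fst_pre] at ha
    exact absurd ha (Set.notMem_empty a)
  · intro a ha
    rw [show {x : G.Dart × ↥(Set.Icc (0:ℝ) 1) | x.1 = d.symm}
        = {x | x.1 ∈ ({d.symm} : Set G.Dart)} from rfl, frontier_fst_pre] at ha
    exact absurd ha (Set.notMem_empty a)
  · exact (continuous_of_discreteTopology
      (f := fun e : G.Dart => side d e.toProd.1)).comp continuous_fst

lemma continuous_Phi (d : G.Dart) (hb : Hb d) : Continuous (Phi d hb) :=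
  continuous_quot_lift _ (continuous_phi d)

/-- double crossing: an injective path cannot hit the open part of the edge `d`
at the same height twice. -/
lemma crossing {p q : TreeSpace G} (γ : Path p q) (hinj : Function.Injective ⇑γ)
    (d : G.Dart) (hb : Hb d) {r : ℝ} (hr : r ∈ Set.Ioo (0:ℝ) 1)
    {a b : ℝ} (ha : a ∈ Set.Icc (0:ℝ) 1) (hb' : b ∈ Set.Icc (0:ℝ) 1)
    (h1 : Phi d hb (γ.extend a) = r) (h2 : Phi d hb (γ.extend b) = r) : a = b := by
  have e1 := Phi_eq_inner hb hr h1
  have e2 := Phi_eq_inner hb hr h2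
  rw [Path.extend_apply γ ha] at e1
  rw [Path.extend_apply γ hb'] at e2
  have := hinj (e1.trans e2.symm)
  exact congrArg Subtype.val this

/-- The open half-star of a vertex, upstairs. -/
def Pv (G : SimpleGraph V) (v : V) : Set (G.Dart × ↥(Set.Icc (0:ℝ) 1)) :=
  {x | (x.1.toProd.1 = v ∧ (x.2:ℝ) < 1/2) ∨ (x.1.toProd.2 = v ∧ 1 - (x.2:ℝ) < 1/2)}

lemma Pv_iff_of_rel (v : V) {a b : G.Dart × ↥(Set.Icc (0:ℝ) 1)} (h : treeRel G a b) :
    a ∈ Pv G v ↔ b ∈ Pv G v := by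
  rcases h with ⟨h1, h2⟩ | ⟨h1, h2, h3⟩
  · have hf : a.1.toProd.1 = b.1.toProd.2 := by rw [h1]; rfl
    have hs : a.1.toProd.2 = b.1.toProd.1 := by rw [h1]; rfl
    constructor
    · rintro (⟨hv, hlt⟩ | ⟨hv, hlt⟩)
      · exact Or.inr ⟨by rw [← hf, hv], by rw [← h2]; exact hlt⟩
      · exact Or.inl ⟨by rw [← hs, hv], by rw [h2] at hlt; linarith⟩
    · rintro (⟨hv, hlt⟩ | ⟨hv, hlt⟩)
      · exact Or.inr ⟨by rw [hs, hv], by rw [h2]; linarith⟩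
      · exact Or.inl ⟨by rw [hf, hv], by rw [h2]; linarith⟩
  · constructor
    · rintro (⟨hv, hlt⟩ | ⟨hv, hlt⟩)
      · exact Or.inl ⟨by rw [← h1, hv], by rw [h3]; norm_num⟩
      · rw [h2] at hlt; norm_num at hlt
    · rintro (⟨hv, hlt⟩ | ⟨hv, hlt⟩)
      · exact Or.inl ⟨by rw [h1, hv], by rw [h2]; norm_num⟩
      · rw [h3] at hlt; norm_num at hlt

lemma Pv_sat (v : V) {a b : G.Dart × ↥(Set.Icc (0:ℝ) 1)}
    (h : Relation.EqvGen (treeRel G) a b) : a ∈ Pv G v ↔ b ∈ Pv G v := by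
  induction h with
  | rel x y h => exact Pv_iff_of_rel v h
  | refl x => exact Iff.rfl
  | symm x y _ ih => exact ih.symm
  | trans x y z _ _ ih1 ih2 => exact ih1.trans ih2

lemma Pv_open (v : V) : IsOpen (Pv G v) := by
  have : Pv G v =
      ({x : G.Dart × ↥(Set.Icc (0:ℝ) 1) | x.1 ∈ {e : G.Dart | e.toProd.1 = v}} ∩
        (fun x : G.Dart × ↥(Set.Icc (0:ℝ) 1) => (x.2 : ℝ)) ⁻¹' Set.Iio (1/2)) ∪
      ({x | x.1 ∈ {e : G.Dart | e.toProd.2 = v}} ∩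
        (fun x : G.Dart × ↥(Set.Icc (0:ℝ) 1) => 1 - (x.2 : ℝ)) ⁻¹' Set.Iio (1/2)) := by
    ext x
    simp only [Pv, Set.mem_setOf_eq, Set.mem_union, Set.mem_inter_iff, Set.mem_preimage,
      Set.mem_Iio]
  rw [this]
  have hc2 : Continuous fun x : G.Dart × ↥(Set.Icc (0:ℝ) 1) => (x.2 : ℝ) :=
    continuous_subtype_val.comp continuous_snd
  exact (((isOpen_discrete _).preimage continuous_fst).inter (isOpen_Iio.preimage hc2)).union
    (((isOpen_discrete _).preimage continuous_fst).inter
      (isOpen_Iio.preimage (by fun_prop)))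

/-- The open half-star of a vertex, in the tree space. -/
def Ov (G : SimpleGraph V) (v : V) : Set (TreeSpace G) :=
  Quot.mk (treeRel G) '' Pv G v

lemma Ov_open (v : V) : IsOpen (Ov G v) := by
  refine (isQuotientMap_quot_mk (r := treeRel G)).isOpen_preimage.mp ?_
  have : Quot.mk (treeRel G) ⁻¹' (Ov G v) = Pv G v := by
    ext x
    constructor
    · rintro ⟨y, hy, hxy⟩
      exact (Pv_sat v (Quot.eq.mp hxy)).mp hy
    · intro hx
      exact ⟨x, hx, rfl⟩
  rw [this]
  exact Pv_open v

lemma key_inner {p q : TreeSpace G} (γ : Path p q) (hinj : Function.Injective ⇑γ)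
    {C : Set (TreeSpace G)} (hC : IsPreconnected C) (hpC : p ∈ C) (hqC : q ∈ C)
    {z : TreeSpace G} {τ : unitInterval} (hτ : γ τ = z)
    (hzp : z ≠ p) (hzq : z ≠ q) (d : G.Dart) (hb : Hb d) {t : ℝ}
    (ht : t ∈ Set.Ioo (0:ℝ) 1) (hrep : mkp G d ⟨t, Set.Ioo_subset_Icc_self ht⟩ = z) :
    z ∈ closure C := by
  set Ψ : TreeSpace G → ℝ := Phi d hb with hΨ
  have hΨc : Continuous Ψ := continuous_Phi d hb
  set h : ℝ → ℝ := fun r => Ψ (γ.extend r) with hh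
  have hhc : Continuous h := hΨc.comp γ.continuous_extend
  set t0 : ℝ := (τ : ℝ) with ht0
  have ht0m : t0 ∈ Set.Icc (0:ℝ) 1 := τ.2
  have ht0pos : 0 < t0 := by
    rcases lt_or_eq_of_le ht0m.1 with h | h
    · exact h
    · exfalso; apply hzp
      rw [← hτ, show τ = 0 from Subtype.ext h.symm, γ.source]
  have ht0lt : t0 < 1 := by
    rcases lt_or_eq_of_le ht0m.2 with h | h
    · exact h
    · exfalso; apply hzq
      rw [← hτ, show τ = 1 from Subtype.ext h, γ.target]
  have hext : γ.extend t0 = z := by rw [Path.extend_apply γ ht0m, ← hτ]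
  have hht0 : h t0 = t := by
    rw [hh]; simp only; rw [hext, ← hrep, hΨ, Phi_mkp, phi_self]
  have hh0 : h 0 = Ψ p := by rw [hh]; simp only [Path.extend_zero]
  have hh1 : h 1 = Ψ q := by rw [hh]; simp only [Path.extend_one]
  have hΨz : Ψ z = t := by rw [← hrep, hΨ, Phi_mkp, phi_self]
  have hΨpne : Ψ p ≠ t := by
    intro hc
    exact hzp (Phi_eq_inner hb ht hc ▸ hrep).symm
  have hΨqne : Ψ q ≠ t := by
    intro hc
    exact hzq (Phi_eq_inner hb ht hc ▸ hrep).symm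
  -- exclude same side
  have hboth_lt : ¬ (Ψ p < t ∧ Ψ q < t) := by
    rintro ⟨hp1, hq1⟩
    set r : ℝ := (max (Ψ p) (Ψ q) + t) / 2 with hrdef
    have hmax0 : 0 ≤ max (Ψ p) (Ψ q) := le_max_of_le_left (Phi_nonneg d hb p)
    have hmaxt : max (Ψ p) (Ψ q) < t := max_lt hp1 hq1
    have hrI : r ∈ Set.Ioo (0:ℝ) 1 := ⟨by rw [hrdef]; linarith [ht.1], by
      rw [hrdef]; linarith [ht.2]⟩
    have hrlt : r < t := by rw [hrdef]; linarith
    have hx : r ∈ Set.Icc (h 0) (h t0) := by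
      rw [hh0, hht0]
      exact ⟨by rw [hrdef]; have := le_max_left (Ψ p) (Ψ q); linarith, hrlt.le⟩
    obtain ⟨x, hxI, hxr⟩ := intermediate_value_Icc ht0m.1 hhc.continuousOn hx
    have hy : r ∈ Set.Icc (h 1) (h t0) := by
      rw [hh1, hht0]
      exact ⟨by rw [hrdef]; have := le_max_right (Ψ p) (Ψ q); linarith, hrlt.le⟩
    obtain ⟨y, hyI, hyr⟩ := intermediate_value_Icc' ht0m.2 hhc.continuousOn hy
    have hxy : x = y := crossing γ hinj d hb hrI
      ⟨hxI.1, hxI.2.trans ht0m.2⟩ ⟨ht0m.1.trans hyI.1, hyI.2⟩ hxr hyr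
    have hxne : x ≠ t0 := by
      intro hc; rw [hc, hht0] at hxr; exact absurd hxr (ne_of_gt hrlt)
    have h5 : x < t0 := lt_of_le_of_ne hxI.2 hxne
    have h6 : t0 ≤ y := hyI.1
    rw [hxy] at h5; linarith
  have hboth_gt : ¬ (t < Ψ p ∧ t < Ψ q) := by
    rintro ⟨hp1, hq1⟩
    set r : ℝ := (t + min (Ψ p) (Ψ q)) / 2 with hrdef
    have hmin1 : min (Ψ p) (Ψ q) ≤ 1 := le_trans (min_le_left _ _) (Phi_le_one d hb p)
    have htmin : t < min (Ψ p) (Ψ q) := lt_min hp1 hq1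
    have hrI : r ∈ Set.Ioo (0:ℝ) 1 := ⟨by rw [hrdef]; linarith [ht.1], by
      rw [hrdef]; linarith [ht.2]⟩
    have hrgt : t < r := by rw [hrdef]; linarith
    have hx : r ∈ Set.Icc (h t0) (h 0) := by
      rw [hh0, hht0]
      exact ⟨hrgt.le, by rw [hrdef]; have := min_le_left (Ψ p) (Ψ q); linarith⟩
    obtain ⟨x, hxI, hxr⟩ := intermediate_value_Icc' ht0m.1 hhc.continuousOn hx
    have hy : r ∈ Set.Icc (h t0) (h 1) := by
      rw [hh1, hht0]
      exact ⟨hrgt.le, by rw [hrdef]; have := min_le_right (Ψ p) (Ψ q); linarith⟩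
    obtain ⟨y, hyI, hyr⟩ := intermediate_value_Icc ht0m.2 hhc.continuousOn hy
    have hxy : x = y := crossing γ hinj d hb hrI
      ⟨hxI.1, hxI.2.trans ht0m.2⟩ ⟨ht0m.1.trans hyI.1, hyI.2⟩ hxr hyr
    have hxne : x ≠ t0 := by
      intro hc; rw [hc, hht0] at hxr; exact absurd hxr (ne_of_lt hrgt)
    have h5 : x < t0 := lt_of_le_of_ne hxI.2 hxne
    have h6 : t0 ≤ y := hyI.1
    rw [hxy] at h5; linarith
  have hmain : (Ψ p < t ∧ t < Ψ q) ∨ (Ψ q < t ∧ t < Ψ p) := by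
    rcases lt_or_gt_of_ne hΨpne with hp1 | hp1
    · rcases lt_or_gt_of_ne hΨqne with hq1 | hq1
      · exact absurd ⟨hp1, hq1⟩ hboth_lt
      · exact Or.inl ⟨hp1, hq1⟩
    · rcases lt_or_gt_of_ne hΨqne with hq1 | hq1
      · exact Or.inr ⟨hq1, hp1⟩
      · exact absurd ⟨hp1, hq1⟩ hboth_gt
  -- intermediate value within C
  rcases hmain with ⟨h1, h2⟩ | ⟨h1, h2⟩
  · obtain ⟨w, hwC, hw⟩ := hC.intermediate_value hpC hqC hΨc.continuousOn ⟨h1.le, h2.le⟩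
    have := Phi_eq_inner hb ht hw
    rw [this] at hwC
    rw [hrep] at hwC
    exact subset_closure hwC
  · obtain ⟨w, hwC, hw⟩ := hC.intermediate_value hqC hpC hΨc.continuousOn ⟨h1.le, h2.le⟩
    have := Phi_eq_inner hb ht hw
    rw [this] at hwC
    rw [hrep] at hwC
    exact subset_closure hwC

lemma key_vertex {p q : TreeSpace G} (γ : Path p q) (hinj : Function.Injective ⇑γ)
    (hbr : ∀ d : G.Dart, Hb d)
    {C : Set (TreeSpace G)} (hC : IsPreconnected C) (hpC : p ∈ C) (hqC : q ∈ C)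
    {z : TreeSpace G} {τ : unitInterval} (hτ : γ τ = z)
    (hzp : z ≠ p) (hzq : z ≠ q) (e₀ : G.Dart) {s₀ : Set.Icc (0:ℝ) 1}
    (hs₀ : (s₀ : ℝ) = 0) (hrep : mkp G e₀ s₀ = z) :
    z ∈ closure C := by
  set v : V := e₀.toProd.1 with hv
  set t0 : ℝ := (τ : ℝ) with ht0
  have ht0m : t0 ∈ Set.Icc (0:ℝ) 1 := τ.2
  have ht0pos : 0 < t0 := by
    rcases lt_or_eq_of_le ht0m.1 with h | h
    · exact h
    · exfalso; apply hzp
      rw [← hτ, show τ = 0 from Subtype.ext h.symm, γ.source]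
  have ht0lt : t0 < 1 := by
    rcases lt_or_eq_of_le ht0m.2 with h | h
    · exact h
    · exfalso; apply hzq
      rw [← hτ, show τ = 1 from Subtype.ext h, γ.target]
  have hext : γ.extend t0 = z := by rw [Path.extend_apply γ ht0m, ← hτ]
  -- find a nearby time t1 landing in the star of v
  have hzOv : z ∈ Ov G v := by
    rw [← hrep]
    exact ⟨(e₀, s₀), Or.inl ⟨rfl, by rw [hs₀]; norm_num⟩, rfl⟩
  have hnhds : γ.extend ⁻¹' (Ov G v) ∈ nhds t0 := by
    apply γ.continuous_extend.continuousAt.preimage_mem_nhds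
    rw [hext] at *
    exact (Ov_open v).mem_nhds hzOv
  obtain ⟨ε, hε, hball⟩ := Metric.mem_nhds_iff.mp hnhds
  set t1 : ℝ := t0 + min (ε/2) ((1 - t0)/2) with ht1
  have hminpos : 0 < min (ε/2) ((1 - t0)/2) := lt_min (by linarith) (by linarith)
  have ht01 : t0 < t1 := by rw [ht1]; linarith
  have ht1le : t1 ≤ 1 := by
    have : min (ε/2) ((1 - t0)/2) ≤ (1 - t0)/2 := min_le_right _ _
    rw [ht1]; linarith
  have ht1m : t1 ∈ Set.Icc (0:ℝ) 1 := ⟨by linarith, ht1le⟩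
  have ht1ball : t1 ∈ Metric.ball t0 ε := by
    rw [Metric.mem_ball, Real.dist_eq, abs_of_pos (by linarith : (0:ℝ) < t1 - t0)]
    have : min (ε/2) ((1 - t0)/2) ≤ ε/2 := min_le_left _ _
    rw [ht1]; linarith
  have ht1Ov : γ.extend t1 ∈ Ov G v := hball ht1ball
  obtain ⟨x, hxP, hxeq⟩ := ht1Ov
  -- normalize to a dart based at v
  obtain ⟨d, s0, hdv, hs0half, hds⟩ :
      ∃ (d : G.Dart) (s0 : Set.Icc (0:ℝ) 1), d.toProd.1 = v ∧ (s0:ℝ) < 1/2 ∧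
        mkp G d s0 = γ.extend t1 := by
    rcases hxP with ⟨h1, h2⟩ | ⟨h1, h2⟩
    · exact ⟨x.1, x.2, h1, h2, hxeq⟩
    · refine ⟨x.1.symm, ⟨1 - (x.2:ℝ), one_sub_mem x.2.2⟩, h1, by simpa using h2, ?_⟩
      rw [← (mkp_symm x.1 x.2)]
      exact hxeq
  have hs0pos : 0 < (s0 : ℝ) := by
    rcases lt_or_eq_of_le s0.2.1 with h | h
    · exact h
    · exfalso
      have : mkp G d s0 = z := by
        rw [← hrep]
        exact mkp_vert (by rw [hdv]) _ _ h.symm hs₀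
      rw [this] at hds
      have h2 : γ.extend t1 = γ τ := by rw [hτ]; exact hds.symm
      rw [Path.extend_apply γ ht1m] at h2
      have := congrArg Subtype.val (hinj h2)
      simp only at this
      rw [← ht0] at this
      linarith
  set hb : Hb d := hbr d
  set Ψ : TreeSpace G → ℝ := Phi d hb with hΨ
  have hΨc : Continuous Ψ := continuous_Phi d hb
  set h : ℝ → ℝ := fun r => Ψ (γ.extend r) with hh
  have hhc : Continuous h := hΨc.comp γ.continuous_extend
  have hΨz : Ψ z = 0 := by
    rw [← hrep, hΨ, Phi_mkp, phi_zero hb e₀ hs₀, ← hv, ← hdv, side_fst]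
  have hht0 : h t0 = 0 := by rw [hh]; simp only; rw [hext, hΨz]
  have hht1 : h t1 = (s0:ℝ) := by rw [hh]; simp only; rw [← hds, hΨ, Phi_mkp, phi_self]
  have hh0 : h 0 = Ψ p := by rw [hh]; simp only [Path.extend_zero]
  have hh1 : h 1 = Ψ q := by rw [hh]; simp only [Path.extend_one]
  have hs0lt1 : (s0:ℝ) < 1 := by linarith
  -- Step A : Ψ p = 0
  have hΨp : Ψ p = 0 := by
    by_contra hne
    have hppos : 0 < Ψ p := lt_of_le_of_ne (Phi_nonneg d hb p) (Ne.symm hne)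
    set r : ℝ := min (Ψ p) (s0:ℝ) / 2 with hrdef
    have hrpos : 0 < r := by rw [hrdef]; have := lt_min hppos hs0pos; linarith
    have hrp : r < Ψ p := by
      rw [hrdef]; have := min_le_left (Ψ p) (s0:ℝ); linarith
    have hrs : r < (s0:ℝ) := by
      rw [hrdef]; have := min_le_right (Ψ p) (s0:ℝ); linarith
    have hrI : r ∈ Set.Ioo (0:ℝ) 1 := ⟨hrpos, by linarith⟩
    obtain ⟨x', hxI, hxr⟩ := intermediate_value_Icc' ht0m.1 hhc.continuousOn
      (by rw [hh0, hht0]; exact ⟨hrpos.le, hrp.le⟩ : r ∈ Set.Icc (h t0) (h 0))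
    obtain ⟨y', hyI, hyr⟩ := intermediate_value_Icc ht01.le hhc.continuousOn
      (by rw [hht0, hht1]; exact ⟨hrpos.le, hrs.le⟩ : r ∈ Set.Icc (h t0) (h t1))
    have hxy : x' = y' := crossing γ hinj d hb hrI
      ⟨hxI.1, hxI.2.trans ht0m.2⟩ ⟨ht0m.1.trans hyI.1, hyI.2.trans ht1le⟩ hxr hyr
    have hxne : x' ≠ t0 := by
      intro hc; rw [hc, hht0] at hxr; exact absurd hxr.symm (ne_of_gt hrpos)
    have h5 : x' < t0 := lt_of_le_of_ne hxI.2 hxne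
    have h6 : t0 ≤ y' := hyI.1
    rw [hxy] at h5; linarith
  -- Step B : Ψ q > 0
  have hΨq : 0 < Ψ q := by
    rcases lt_or_eq_of_le (Phi_nonneg d hb q) with hlt | heq
    · exact hlt
    exfalso
    have heq' : Ψ q = 0 := by rw [hΨ]; exact heq.symm
    set r : ℝ := (s0:ℝ) / 2 with hrdef
    have hrpos : 0 < r := by rw [hrdef]; linarith
    have hrs : r < (s0:ℝ) := by rw [hrdef]; linarith
    have hrI : r ∈ Set.Ioo (0:ℝ) 1 := ⟨hrpos, by linarith⟩
    obtain ⟨x', hxI, hxr⟩ := intermediate_value_Icc ht01.le hhc.continuousOn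
      (by rw [hht0, hht1]; exact ⟨hrpos.le, hrs.le⟩ : r ∈ Set.Icc (h t0) (h t1))
    obtain ⟨y', hyI, hyr⟩ := intermediate_value_Icc' ht1le hhc.continuousOn
      (by rw [hh1, hht1, heq']; exact ⟨hrpos.le, hrs.le⟩ : r ∈ Set.Icc (h 1) (h t1))
    have hxy : x' = y' := crossing γ hinj d hb hrI
      ⟨ht0m.1.trans hxI.1, hxI.2.trans ht1le⟩ ⟨(by linarith : (0:ℝ) ≤ t1).trans hyI.1, hyI.2⟩
      hxr hyr
    have hxne : x' ≠ t1 := by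
      intro hc; rw [hc, hht1] at hxr; exact absurd hxr (ne_of_gt hrs)
    have h5 : x' < t1 := lt_of_le_of_ne hxI.2 hxne
    have h6 : t1 ≤ y' := hyI.1
    rw [hxy] at h5; linarith
  -- Step C : z is in the closure of C
  set c0 : ℝ := min (Ψ q) 2⁻¹ with hc0
  have hc0pos : 0 < c0 := lt_min hΨq (by norm_num)
  have hc0le : c0 ≤ Ψ q := min_le_left _ _
  have hc0lt1 : c0 < 1 := lt_of_le_of_lt (min_le_right _ _) (by norm_num)
  set u : ℕ → ℝ := fun n => c0 / (n + 1) with hu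
  have huI : ∀ n : ℕ, u n ∈ Set.Ioo (0:ℝ) 1 := by
    intro n
    constructor
    · apply div_pos hc0pos; positivity
    · have h1 : u n ≤ c0 := by
        rw [hu]
        apply div_le_self hc0pos.le
        simp only [le_add_iff_nonneg_left]
        exact_mod_cast Nat.zero_le n
      linarith
  have hIV : ∀ n : ℕ, ∃ w ∈ C, Ψ w = u n := by
    intro n
    apply hC.intermediate_value hpC hqC hΨc.continuousOn
    rw [hΨp]
    refine ⟨(huI n).1.le, ?_⟩
    have h1 : u n ≤ c0 := by
      rw [hu]
      apply div_le_self hc0pos.le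
      simp only [le_add_iff_nonneg_left]
      exact_mod_cast Nat.zero_le n
    linarith
  choose w hwC hwΨ using hIV
  have hwz : ∀ n, w n = mkp G d ⟨u n, Set.Ioo_subset_Icc_self (huI n)⟩ :=
    fun n => Phi_eq_inner hb (huI n) (hwΨ n)
  -- the sequence tends to z
  set m : ℝ → TreeSpace G := fun r => Quot.mk (treeRel G) (d, Set.projIcc 0 1 zero_le_one r)
    with hm
  have hmc : Continuous m := continuous_quot_mk.comp (continuous_const.prodMk continuous_projIcc)
  have hm0 : m 0 = z := by
    rw [hm]
    simp only [Set.projIcc_left]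
    rw [← hrep]
    exact (mkp_vert (by rw [hdv]) _ _ rfl hs₀)
  have hmu : ∀ n, m (u n) = w n := by
    intro n
    rw [hwz n, hm]
    simp only
    rw [Set.projIcc_of_mem zero_le_one (Set.Ioo_subset_Icc_self (huI n))]
    rfl
  have hulim : Filter.Tendsto u Filter.atTop (nhds 0) := by
    have h1 : Filter.Tendsto (fun n : ℕ => 1 / ((n:ℝ) + 1)) Filter.atTop (nhds 0) :=
      tendsto_one_div_add_atTop_nhds_zero_nat
    have h2 := h1.const_mul c0
    rw [mul_zero] at h2
    convert h2 using 2 with n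
    rw [hu]
    field_simp
  have hwlim : Filter.Tendsto w Filter.atTop (nhds z) := by
    have := (hmc.continuousAt (x := 0)).tendsto.comp hulim
    rw [hm0] at this
    exact this.congr hmu
  exact mem_closure_of_tendsto hwlim (Filter.Eventually.of_forall hwC)

lemma key (hacyc : G.IsAcyclic) {p q : TreeSpace G} (γ : Path p q)
    (hinj : Function.Injective ⇑γ)
    {C : Set (TreeSpace G)} (hC : IsPreconnected C) (hpC : p ∈ C) (hqC : q ∈ C)
    {z : TreeSpace G} (hz : z ∈ Set.range ⇑γ) (hzp : z ≠ p) (hzq : z ≠ q) :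
    z ∈ closure C := by
  have hbr : ∀ d : G.Dart, Hb d := by
    intro d
    have h1 := (SimpleGraph.isAcyclic_iff_forall_adj_isBridge.mp hacyc) d.adj
    rw [SimpleGraph.isBridge_iff] at h1
    exact h1
  obtain ⟨τ, hτ⟩ := hz
  obtain ⟨⟨e, s⟩, hrep⟩ := Quot.exists_rep z
  have hrep' : mkp G e s = z := hrep
  by_cases hs0 : (s:ℝ) = 0
  · exact key_vertex γ hinj hbr hC hpC hqC hτ hzp hzq e hs0 hrep'
  by_cases hs1 : (s:ℝ) = 1
  · refine key_vertex γ hinj hbr hC hpC hqC hτ hzp hzq e.symm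
      (s₀ := ⟨1 - (s:ℝ), one_sub_mem s.2⟩) (by simp [hs1]) ?_
    rw [← mkp_symm]
    exact hrep'
  · have hIoo : (s:ℝ) ∈ Set.Ioo (0:ℝ) 1 :=
      ⟨lt_of_le_of_ne s.2.1 (Ne.symm hs0), lt_of_le_of_ne s.2.2 hs1⟩
    refine key_inner γ hinj hC hpC hqC hτ hzp hzq e (hbr e) hIoo ?_
    rw [show (⟨(s:ℝ), Set.Ioo_subset_Icc_self hIoo⟩ : Set.Icc (0:ℝ) 1) = s from Subtype.ext rfl]
    exact hrep'

end TreeAux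

/-- On a geometric tree, for a continuous function with finitely many local minima and two
disjoint local minima `Xi`, `Xj`, the least level at which `Xi` and `Xj` lie in the same
connected component of the sublevel set equals the maximum of `f` over the shortest path
between `Xi` and `Xj` (the injective path meeting `Xi`, `Xj` only at its endpoints). -/
theorem stmt8 {V : Type} [Fintype V] (G : SimpleGraph V)
    (hconn : G.Connected) (hacyc : G.IsAcyclic)
    (f : TreeSpace G → ℝ) (hf : Continuous f)
    (hmin : {M : Set (TreeSpace G) | IsLocMin f M}.Finite)
    (Xi Xj : Set (TreeSpace G)) (hXi : IsLocMin f Xi) (hXj : IsLocMin f Xj)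
    (hdisj : Disjoint Xi Xj)
    (p q : TreeSpace G) (γ : Path p q) (hp : p ∈ Xi) (hq : q ∈ Xj)
    (hinj : Function.Injective γ)
    (hγi : Set.range γ ∩ Xi = {p}) (hγj : Set.range γ ∩ Xj = {q}) :
    IsGreatest (f '' Set.range γ) (sSup (f '' Set.range γ)) ∧
    IsLeast {s : ℝ | SameComp f Xi Xj s} (sSup (f '' Set.range γ)) := by
  set S : Set (TreeSpace G) := Set.range ⇑γ with hS
  have hScomp : IsCompact S := isCompact_range γ.continuous
  have hpS : p ∈ S := ⟨0, γ.source⟩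
  have hqS : q ∈ S := ⟨1, γ.target⟩
  have hSne : S.Nonempty := ⟨p, hpS⟩
  have hfS : IsCompact (f '' S) := hScomp.image hf
  have hfSne : (f '' S).Nonempty := hSne.image f
  set M : ℝ := sSup (f '' S) with hM
  have hgreat : IsGreatest (f '' S) M :=
    ⟨hfS.sSup_mem hfSne, fun x hx => le_csSup hfS.bddAbove hx⟩
  refine ⟨hgreat, ?_, ?_⟩
  · -- M is a level at which Xi and Xj communicate
    have hSsub : S ⊆ sub f M := by
      intro x hx
      exact hgreat.2 ⟨x, hx, rfl⟩
    have hSpre : IsPreconnected S := isPreconnected_range γ.continuous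
    have hsub : S ⊆ connectedComponentIn (sub f M) p :=
      hSpre.subset_connectedComponentIn hpS hSsub
    refine ⟨p, hp, q, hq, hSsub hpS, ?_⟩
    exact connectedComponentIn_eq (hsub hqS)
  · -- M is a lower bound
    rintro s ⟨x, hxXi, y, hyXj, hxsub, hcc⟩
    have hclosed : IsClosed (sub f s) := by
      have : sub f s = f ⁻¹' Set.Iic s := rfl
      rw [this]
      exact IsClosed.preimage hf isClosed_Iic
    set C : Set (TreeSpace G) := connectedComponentIn (sub f s) x with hC
    have hxC : x ∈ C := mem_connectedComponentIn hxsub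
    have hysub : y ∈ sub f s := by
      rw [connectedComponentIn_nonempty_iff.symm, ← hcc]
      exact ⟨x, hxC⟩
    have hyC : y ∈ C := by
      rw [hcc]
      exact mem_connectedComponentIn hysub
    have hCpre : IsPreconnected C := isPreconnected_connectedComponentIn
    have hCsub : C ⊆ sub f s := connectedComponentIn_subset _ _
    obtain ⟨ci, hci⟩ := hXi.2.1
    obtain ⟨cj, hcj⟩ := hXj.2.1
    have hXisub : Xi ⊆ sub f s := by
      intro w hw
      have : f w = ci := hci w hw
      have hx' : f x = ci := hci x hxXi
      show f w ≤ s
      rw [this, ← hx']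
      exact hxsub
    have hXjsub : Xj ⊆ sub f s := by
      intro w hw
      have : f w = cj := hcj w hw
      have hy' : f y = cj := hcj y hyXj
      show f w ≤ s
      rw [this, ← hy']
      exact hysub
    have hXiC : Xi ⊆ C := hXi.1.isPreconnected.subset_connectedComponentIn hxXi hXisub
    have hXjC : Xj ⊆ C := by
      rw [hcc]
      exact hXj.1.isPreconnected.subset_connectedComponentIn hyXj hXjsub
    have hpC : p ∈ C := hXiC hp
    have hqC : q ∈ C := hXjC hq
    -- the max of f over the path
    obtain ⟨z, hzS, hzM⟩ := hgreat.1
    rw [← hzM]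
    by_cases hzp : z = p
    · rw [hzp]; exact hCsub hpC
    by_cases hzq : z = q
    · rw [hzq]; exact hCsub hqC
    · have hzcl : z ∈ closure C :=
        TreeAux.key hacyc γ hinj hCpre hpC hqC hzS hzp hzq
      have : z ∈ closure (sub f s) := closure_mono hCsub hzcl
      rwa [hclosed.closure_eq] at this
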